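/- For every τ in the complex upper half-plane, η(τ + 1/2) = e^{2πi/48} · η(2τ)³ / (η(τ)·η(4τ)). -/

import Mathlib

/-- The Dedekind eta function `η(τ) = e^{2πiτ/24} ∏_{ℓ≥1} (1 − e^{2πiℓτ})`. -/
noncomputable def dedekindEta (τ : ℂ) : ℂ :=
  Complex.exp (2 * Real.pi * Complex.I * τ / 24) *
    ∏' ℓ : ℕ, (1 - Complex.exp (2 * Real.pi * Complex.I * (ℓ + 1) * τ))

open Complex Filter

namespace EtaHalfAux

noncomputable def A (c q : ℂ) : ℂ := ∏' k : ℕ, (1 - c * q ^ k)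

lemma term_ne_zero {c q : ℂ} (hc : ‖c‖ < 1) (hq : ‖q‖ ≤ 1) (k : ℕ) :
    (1 : ℂ) - c * q ^ k ≠ 0 := by
  intro h
  have h1 : c * q ^ k = 1 := by linear_combination -h
  have h2 : ‖c * q ^ k‖ < 1 := by
    rw [norm_mul, norm_pow]
    calc ‖c‖ * ‖q‖ ^ k ≤ ‖c‖ * 1 := by
          gcongr
          exact pow_le_one₀ (norm_nonneg q) hq
      _ = ‖c‖ := mul_one _
      _ < 1 := hc
  rw [h1] at h2
  simp at h2

lemma summable_log {c q : ℂ} (hc : ‖c‖ < 1) (hq : ‖q‖ < 1) :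
    Summable fun k : ℕ => Complex.log (1 - c * q ^ k) := by
  apply Summable.of_norm_bounded_eventually (g := fun k => 3 / 2 * (‖c‖ * ‖q‖ ^ k))
    (((summable_geometric_of_lt_one (norm_nonneg q) hq).mul_left ‖c‖).mul_left (3 / 2))
  rw [Nat.cofinite_eq_atTop]
  have h0 : Tendsto (fun k : ℕ => ‖c‖ * ‖q‖ ^ k) atTop (nhds (‖c‖ * 0)) :=
    (tendsto_pow_atTop_nhds_zero_of_lt_one (norm_nonneg q) hq).const_mul _
  rw [mul_zero] at h0
  filter_upwards [h0.eventually (gt_mem_nhds (by norm_num : (0:ℝ) < 1/2))] with k hk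
  have hb : ‖-(c * q ^ k)‖ ≤ 1 / 2 := by
    rw [norm_neg, norm_mul, norm_pow]; exact hk.le
  have := Complex.norm_log_one_add_half_le_self hb
  rw [show (1 : ℂ) + -(c * q ^ k) = 1 - c * q ^ k by ring] at this
  refine this.trans ?_
  rw [norm_neg, norm_mul, norm_pow]

lemma multipliableA {c q : ℂ} (hc : ‖c‖ < 1) (hq : ‖q‖ < 1) :
    Multipliable fun k : ℕ => (1 : ℂ) - c * q ^ k :=
  Complex.multipliable_of_summable_log (summable_log hc hq)

lemma A_ne_zero {c q : ℂ} (hc : ‖c‖ < 1) (hq : ‖q‖ < 1) : A c q ≠ 0 := by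
  have h := Complex.cexp_tsum_eq_tprod (f := fun k => 1 - c * q ^ k)
    (fun k => term_ne_zero hc hq.le k) (summable_log hc hq)
  rw [A, ← h]
  exact Complex.exp_ne_zero _

lemma A_split {c q : ℂ} (hc : ‖c‖ < 1) (hq : ‖q‖ < 1) :
    A c q = A c (q ^ 2) * A (c * q) (q ^ 2) := by
  have hq2 : ‖q ^ 2‖ < 1 := by
    rw [norm_pow]; exact pow_lt_one₀ (norm_nonneg q) hq two_ne_zero
  have hcq : ‖c * q‖ < 1 := by
    rw [norm_mul]
    nlinarith [norm_nonneg c, norm_nonneg q]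
  have he : Multipliable fun k : ℕ => (1 : ℂ) - c * q ^ (2 * k) :=
    (multipliableA hc hq2).congr fun k => by rw [pow_mul]
  have ho : Multipliable fun k : ℕ => (1 : ℂ) - c * q ^ (2 * k + 1) :=
    (multipliableA hcq hq2).congr fun k => by rw [pow_add, pow_mul, pow_one]; ring
  rw [A, ← tprod_even_mul_odd (f := fun k => (1 : ℂ) - c * q ^ k) he ho]
  congr 1
  · exact tprod_congr fun k => by rw [pow_mul]
  · exact tprod_congr fun k => by rw [pow_add, pow_mul, pow_one]; ring

lemma A_mul_A_neg {c q : ℂ} (hc : ‖c‖ < 1) (hq : ‖q‖ < 1) :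
    A c q * A (-c) q = A (c ^ 2) (q ^ 2) := by
  have hnc : ‖-c‖ < 1 := by rwa [norm_neg]
  rw [A, A, A, ← Multipliable.tprod_mul (multipliableA hc hq) (multipliableA hnc hq)]
  exact tprod_congr fun k => by
    rw [show ((q : ℂ) ^ 2) ^ k = (q ^ k) ^ 2 by rw [← pow_mul, ← pow_mul, mul_comm]]
    ring

lemma key {q : ℂ} (hq : ‖q‖ < 1) :
    A (-q) (-q) * (A q q * A (q ^ 4) (q ^ 4)) = A (q ^ 2) (q ^ 2) ^ 3 := by
  have hnq : ‖-q‖ < 1 := by rwa [norm_neg]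
  have hq2 : ‖q ^ 2‖ < 1 := by
    rw [norm_pow]; exact pow_lt_one₀ (norm_nonneg q) hq two_ne_zero
  have h1 : A q q = A q (q ^ 2) * A (q ^ 2) (q ^ 2) := by
    have := A_split hq hq
    rwa [show q * q = q ^ 2 by ring] at this
  have h2 : A (-q) (-q) = A (-q) (q ^ 2) * A (q ^ 2) (q ^ 2) := by
    have := A_split hnq hnq
    rwa [show (-q) * (-q) = q ^ 2 by ring, show (-q) ^ 2 = q ^ 2 by ring] at this
  have h3 : A q (q ^ 2) * A (-q) (q ^ 2) = A (q ^ 2) (q ^ 4) := by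
    have := A_mul_A_neg hq hq2
    rwa [show ((q : ℂ) ^ 2) ^ 2 = q ^ 4 by ring] at this
  have h4 : A (q ^ 2) (q ^ 2) = A (q ^ 2) (q ^ 4) * A (q ^ 4) (q ^ 4) := by
    have := A_split hq2 hq2
    rwa [show q ^ 2 * q ^ 2 = q ^ 4 by ring, show ((q : ℂ) ^ 2) ^ 2 = q ^ 4 by ring] at this
  rw [h1, h2, h4]
  linear_combination (A (q ^ 2) (q ^ 4) ^ 2 * A (q ^ 4) (q ^ 4) ^ 3) * h3

lemma eta_eq (τ : ℂ) :
    dedekindEta τ = Complex.exp (2 * Real.pi * Complex.I * τ / 24) *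
      A (Complex.exp (2 * Real.pi * Complex.I * τ)) (Complex.exp (2 * Real.pi * Complex.I * τ)) := by
  rw [dedekindEta, A]
  congr 1
  refine tprod_congr fun ℓ => ?_
  have h : Complex.exp (2 * Real.pi * Complex.I * (ℓ + 1) * τ) =
      Complex.exp (2 * Real.pi * Complex.I * τ) *
        Complex.exp (2 * Real.pi * Complex.I * τ) ^ ℓ := by
    rw [← pow_succ', ← Complex.exp_nat_mul]
    congr 1
    push_cast
    ring
  rw [h]

lemma norm_nome_lt_one {τ : ℂ} (hτ : 0 < τ.im) :
    ‖Complex.exp (2 * Real.pi * Complex.I * τ)‖ < 1 := by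
  rw [Complex.norm_exp, Real.exp_lt_one_iff]
  have h : (2 * (Real.pi : ℂ) * Complex.I * τ).re = -(2 * Real.pi * τ.im) := by
    simp [Complex.mul_re, Complex.mul_im]
  rw [h]
  nlinarith [Real.pi_pos]

end EtaHalfAux

open EtaHalfAux in
/-- `η(τ + 1/2) = e^{2πi/48} · η(2τ)³ / (η(τ)·η(4τ))`. -/
theorem dedekindEta_add_half (τ : ℂ) (hτ : 0 < τ.im) :
    dedekindEta (τ + 1 / 2) =
      Complex.exp (2 * Real.pi * Complex.I / 48) * dedekindEta (2 * τ) ^ 3 /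
        (dedekindEta τ * dedekindEta (4 * τ)) := by
  set x : ℂ := 2 * Real.pi * Complex.I * τ with hx
  set q : ℂ := Complex.exp x with hqdef
  have hq : ‖q‖ < 1 := norm_nome_lt_one hτ
  have hq2 : ‖q ^ 2‖ < 1 := by
    rw [norm_pow]; exact pow_lt_one₀ (norm_nonneg q) hq two_ne_zero
  have hq4 : ‖q ^ 4‖ < 1 := by
    rw [norm_pow]; exact pow_lt_one₀ (norm_nonneg q) hq (by norm_num)
  have hnq : ‖-q‖ < 1 := by rwa [norm_neg]
  -- nome rewrites
  have e1 : Complex.exp (2 * Real.pi * Complex.I * (τ + 1 / 2)) = -q := by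
    rw [show 2 * (Real.pi : ℂ) * Complex.I * (τ + 1 / 2) = x + Real.pi * Complex.I by
      rw [hx]; ring, Complex.exp_add, Complex.exp_pi_mul_I]
    ring
  have e2 : Complex.exp (2 * Real.pi * Complex.I * (2 * τ)) = q ^ 2 := by
    rw [show 2 * (Real.pi : ℂ) * Complex.I * (2 * τ) = x + x by rw [hx]; ring,
      Complex.exp_add]
    ring
  have e4 : Complex.exp (2 * Real.pi * Complex.I * (4 * τ)) = q ^ 4 := by
    rw [show 2 * (Real.pi : ℂ) * Complex.I * (4 * τ) = x + (x + (x + x)) by rw [hx]; ring,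
      Complex.exp_add, Complex.exp_add, Complex.exp_add]
    ring
  -- prefactor rewrites
  set E : ℂ := Complex.exp (x / 24) with hE
  have f1 : Complex.exp (2 * Real.pi * Complex.I * (τ + 1 / 2) / 24) =
      Complex.exp (2 * Real.pi * Complex.I / 48) * E := by
    rw [hE, ← Complex.exp_add]
    congr 1
    rw [hx]; ring
  have f2 : Complex.exp (2 * Real.pi * Complex.I * (2 * τ) / 24) = E ^ 2 := by
    rw [hE, sq, ← Complex.exp_add]
    congr 1
    rw [hx]; ring
  have f4 : Complex.exp (2 * Real.pi * Complex.I * (4 * τ) / 24) = E ^ 4 := by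
    rw [hE, show (E : ℂ) ^ 4 = E * (E * (E * E)) by ring, ← Complex.exp_add,
      ← Complex.exp_add, ← Complex.exp_add]
    congr 1
    rw [hx]; ring
  rw [eta_eq, eta_eq, eta_eq, eta_eq, e1, e2, e4, f1, f2, f4]
  rw [show 2 * (Real.pi : ℂ) * Complex.I * τ / 24 = x / 24 by rw [hx], ← hqdef, ← hE]
  have hkey := key hq
  have hA1 : A q q ≠ 0 := A_ne_zero hq hq
  have hA4 : A (q ^ 4) (q ^ 4) ≠ 0 := A_ne_zero hq4 hq4
  have hEne : E ≠ 0 := Complex.exp_ne_zero _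
  have hkne : Complex.exp (2 * Real.pi * Complex.I / 48) ≠ 0 := Complex.exp_ne_zero _
  field_simp
  linear_combination hkey
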